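/- (Switch Lemma) Suppose a randomized algorithm A from L2^{n×d} to an output space satisfies (B, ε, δ)-targeted differential privacy with B, ε > 0. Then for all classic neighboring datasets X, X̂ ∈ L2^{n×d} and all measurable events E, P(A(X) ∈ E) ≤ e^{sε} P(A(X̂) ∈ E) + ((e^{sε} − 1)/(e^ε − 1)) δ, where s = ⌈d(X, X̂)/B⌉ and d(X, X̂) = Σ_i ||X_i − X̂_i||_2 is the cumulative row-wise L2 distance. -/

import Mathlib

open MeasureTheory Real

noncomputable section

/-- Datasets: real n×d matrices as functions. -/
abbrev Mat (n d : ℕ) := Fin n → Fin d → ℝ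

/-- Euclidean (L2) distance between two rows. -/
def rowDist {d : ℕ} (u v : Fin d → ℝ) : ℝ := Real.sqrt (∑ j, (u j - v j) ^ 2)

/-- The set of n×d matrices each of whose rows has L2 norm at most 1. -/
def L2Ball (n d : ℕ) : Set (Mat n d) :=
  {X | ∀ i, Real.sqrt (∑ j, (X i j) ^ 2) ≤ 1}

/-- Classic neighbors: agree on exactly n−1 rows. -/
def ClassicNeighbors {n d : ℕ} (X X' : Mat n d) : Prop :=
  ∃ i, X i ≠ X' i ∧ ∀ j, j ≠ i → X j = X' j

/-- B-neighbors: classic neighbors whose differing rows are within L2 distance B. -/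
def BNeighbors {n d : ℕ} (B : ℝ) (X X' : Mat n d) : Prop :=
  ∃ i, X i ≠ X' i ∧ (∀ j, j ≠ i → X j = X' j) ∧ rowDist (X i) (X' i) ≤ B

/-- (B, ε, δ)-targeted differential privacy. -/
def TDP {n d : ℕ} {Ω : Type*} [MeasurableSpace Ω]
    (A : Mat n d → Measure Ω) (B ε δ : ℝ) : Prop :=
  ∀ X ∈ L2Ball n d, ∀ X' ∈ L2Ball n d, BNeighbors B X X' →
    ∀ E : Set Ω, MeasurableSet E →
      A X E ≤ ENNReal.ofReal (Real.exp ε) * A X' E + ENNReal.ofReal δ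

/-- (ε, δ)-classic differential privacy. -/
def ClassicDP {n d : ℕ} {Ω : Type*} [MeasurableSpace Ω]
    (A : Mat n d → Measure Ω) (ε δ : ℝ) : Prop :=
  ∀ X ∈ L2Ball n d, ∀ X' ∈ L2Ball n d, ClassicNeighbors X X' →
    ∀ E : Set Ω, MeasurableSet E →
      A X E ≤ ENNReal.ofReal (Real.exp ε) * A X' E + ENNReal.ofReal δ

/-- Cumulative row-wise L2 distance between two datasets. -/
def cumDist {n d : ℕ} (X X' : Mat n d) : ℝ := ∑ i, rowDist (X i) (X' i)

/-- Squared Frobenius norm. -/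
def frobSq {a b : ℕ} (M : Fin a → Fin b → ℝ) : ℝ := ∑ i, ∑ j, (M i j) ^ 2

def eE (d : ℕ) : (Fin d → ℝ) ≃ EuclideanSpace ℝ (Fin d) := (WithLp.equiv 2 (Fin d → ℝ)).symm

lemma sqrt_sum_eq_norm {d : ℕ} (u : Fin d → ℝ) : Real.sqrt (∑ j, (u j)^2) = ‖eE d u‖ := by
  rw [EuclideanSpace.norm_eq]; simp [eE, sq_abs]

lemma rowDist_eq_norm {d : ℕ} (u v : Fin d → ℝ) : rowDist u v = ‖eE d u - eE d v‖ := by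
  rw [show eE d u - eE d v = eE d (u - v) from rfl, rowDist, ← sqrt_sum_eq_norm]
  rfl

/-- Switch Lemma: a (B, ε, δ)-TDP algorithm satisfies a degraded
guarantee between any two classic neighbors, with s = ⌈d(X, Y)/B⌉. -/
theorem switch_lemma {n d : ℕ} {Ω : Type*} [MeasurableSpace Ω]
    (A : Mat n d → Measure Ω) (B ε δ : ℝ)
    (hB : 0 < B) (hε : 0 < ε) (hδ : 0 ≤ δ)
    (hA : TDP A B ε δ)
    (X : Mat n d) (hX : X ∈ L2Ball n d)
    (Y : Mat n d) (hY : Y ∈ L2Ball n d)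
    (hcn : ClassicNeighbors X Y)
    (E : Set Ω) (hE : MeasurableSet E) :
    A X E ≤ ENNReal.ofReal (Real.exp ((⌈cumDist X Y / B⌉₊ : ℝ) * ε)) * A Y E +
      ENNReal.ofReal ((Real.exp ((⌈cumDist X Y / B⌉₊ : ℝ) * ε) - 1) /
        (Real.exp ε - 1) * δ) := by
  obtain ⟨i, hne, hrow⟩ := hcn
  have hD : cumDist X Y = rowDist (X i) (Y i) := by
    rw [cumDist]
    refine Finset.sum_eq_single_of_mem i (Finset.mem_univ i) (fun j _ hj => ?_)
    rw [hrow j hj, rowDist]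
    simp
  set U : EuclideanSpace ℝ (Fin d) := eE d (X i) with hU
  set V : EuclideanSpace ℝ (Fin d) := eE d (Y i) with hV
  have hUV : U ≠ V := fun h => hne ((eE d).injective h)
  have hDnorm : rowDist (X i) (Y i) = ‖U - V‖ := rowDist_eq_norm _ _
  have hDpos : 0 < rowDist (X i) (Y i) := by
    rw [hDnorm]; exact norm_sub_pos_iff.mpr hUV
  set s : ℕ := ⌈cumDist X Y / B⌉₊ with hs
  have hs1 : 1 ≤ s := by
    rw [hs, Nat.one_le_ceil_iff]
    exact div_pos (hD ▸ hDpos) hB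
  have hspos : (0:ℝ) < s := by exact_mod_cast hs1
  have hDleB : ‖U - V‖ ≤ s * B := by
    rw [← hDnorm, ← hD]
    have := Nat.le_ceil (cumDist X Y / B)
    rw [← hs] at this
    calc cumDist X Y = cumDist X Y / B * B := by field_simp
      _ ≤ s * B := by gcongr
  -- the interpolation path
  set w : ℕ → (Fin d → ℝ) := fun k => X i + ((k:ℝ)/s) • (Y i - X i) with hw
  have hwE : ∀ k : ℕ, eE d (w k) = U + ((k:ℝ)/s) • (V - U) := fun k => rfl
  set Z : ℕ → Mat n d := fun k => Function.update X i (w k) with hZ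
  have hZ0 : Z 0 = X := by
    have : w 0 = X i := by simp [hw]
    rw [hZ]; simp only [this, Function.update_eq_self]
  have hZs : Z s = Y := by
    have hws : w s = Y i := by
      rw [hw]
      have : (s:ℝ)/s = 1 := div_self (ne_of_gt hspos)
      simp [this]
    funext j
    by_cases hj : j = i
    · subst hj; rw [hZ]; simp [hws]
    · rw [hZ]; simpa [Function.update_of_ne hj] using hrow j hj
  have hZball : ∀ k : ℕ, k ≤ s → Z k ∈ L2Ball n d := by
    intro k hk j
    by_cases hj : j = i
    · rw [hj, hZ]
      simp only [Function.update_self]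
      set t : ℝ := (k:ℝ)/s with ht
      have ht0 : 0 ≤ t := by positivity
      have ht1 : t ≤ 1 := by
        rw [ht, div_le_one hspos]; exact_mod_cast hk
      have : eE d (w k) = (1 - t) • U + t • V := by
        rw [hwE]; module
      rw [sqrt_sum_eq_norm, this]
      calc ‖(1-t) • U + t • V‖ ≤ ‖(1-t) • U‖ + ‖t • V‖ := norm_add_le _ _
        _ = (1-t) * ‖U‖ + t * ‖V‖ := by
            rw [norm_smul, norm_smul, Real.norm_eq_abs, Real.norm_eq_abs,
              abs_of_nonneg (by linarith), abs_of_nonneg ht0]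
        _ ≤ (1-t) * 1 + t * 1 := by
            have hUn : ‖U‖ ≤ 1 := by rw [← sqrt_sum_eq_norm]; exact hX i
            have hVn : ‖V‖ ≤ 1 := by rw [← sqrt_sum_eq_norm]; exact hY i
            gcongr <;> linarith
        _ = 1 := by ring
    · rw [hZ]; simp only [Function.update_of_ne hj]; exact hX j
  have hwdist : ∀ k : ℕ, rowDist (w k) (w (k+1)) = ‖U - V‖ / s := by
    intro k
    have : eE d (w k) - eE d (w (k+1)) = ((1:ℝ)/s) • (U - V) := by
      rw [hwE, hwE]
      push_cast
      match_scalars <;> field_simp <;> ring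
    rw [rowDist_eq_norm, this, norm_smul, Real.norm_eq_abs,
      abs_of_nonneg (by positivity)]
    ring
  have hstep : ∀ k : ℕ, k + 1 ≤ s →
      A (Z k) E ≤ ENNReal.ofReal (Real.exp ε) * A (Z (k+1)) E + ENNReal.ofReal δ := by
    intro k hk
    refine hA (Z k) (hZball k (by omega)) (Z (k+1)) (hZball (k+1) hk) ⟨i, ?_, ?_, ?_⟩ E hE
    · rw [hZ]
      simp only [Function.update_self]
      intro h
      have h0 := hwdist k
      rw [h] at h0
      have : rowDist (w (k+1)) (w (k+1)) = 0 := by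
        rw [rowDist]; simp
      rw [this] at h0
      have : 0 < ‖U - V‖ / s := by
        have := norm_sub_pos_iff.mpr hUV; positivity
      linarith
    · intro j hj; rw [hZ]; simp [Function.update_of_ne hj]
    · rw [hZ]
      simp only [Function.update_self, hwdist k]
      rw [div_le_iff₀ hspos]
      linarith [hDleB]
  -- coefficients
  have hexp1 : (1:ℝ) < Real.exp ε := by
    rw [show (1:ℝ) = Real.exp 0 by simp]; exact Real.exp_lt_exp.mpr hε
  have hcnn : ∀ k : ℕ, 0 ≤ (Real.exp ((k:ℝ)*ε) - 1) / (Real.exp ε - 1) := by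
    intro k
    apply div_nonneg _ (by linarith)
    have : (1:ℝ) ≤ Real.exp ((k:ℝ)*ε) := Real.one_le_exp (by positivity)
    linarith
  have key : ∀ k : ℕ, k ≤ s → A X E ≤ ENNReal.ofReal (Real.exp ((k:ℝ)*ε)) * A (Z k) E +
      ENNReal.ofReal ((Real.exp ((k:ℝ)*ε) - 1) / (Real.exp ε - 1) * δ) := by
    intro k
    induction k with
    | zero => intro _; rw [hZ0]; simp
    | succ k ih =>
      intro hk
      calc A X E ≤ ENNReal.ofReal (Real.exp ((k:ℝ)*ε)) * A (Z k) E +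
            ENNReal.ofReal ((Real.exp ((k:ℝ)*ε) - 1) / (Real.exp ε - 1) * δ) :=
            ih (by omega)
        _ ≤ ENNReal.ofReal (Real.exp ((k:ℝ)*ε)) *
              (ENNReal.ofReal (Real.exp ε) * A (Z (k+1)) E + ENNReal.ofReal δ) +
            ENNReal.ofReal ((Real.exp ((k:ℝ)*ε) - 1) / (Real.exp ε - 1) * δ) := by
            gcongr
            exact hstep k hk
        _ = ENNReal.ofReal (Real.exp (((k:ℕ)+1:ℝ)*ε)) * A (Z (k+1)) E +
            ENNReal.ofReal ((Real.exp (((k:ℕ)+1:ℝ)*ε) - 1) / (Real.exp ε - 1) * δ) := by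
            rw [mul_add, ← mul_assoc, ← ENNReal.ofReal_mul (Real.exp_pos _).le,
              ← Real.exp_add, ← ENNReal.ofReal_mul (Real.exp_pos _).le, add_assoc,
              ← ENNReal.ofReal_add (by positivity) (mul_nonneg (hcnn k) hδ)]
            congr 2
            · ring
            · rw [show ((k:ℕ)+1:ℝ)*ε = (k:ℝ)*ε + ε by ring, Real.exp_add]
              have h0 : Real.exp ε - 1 ≠ 0 := by linarith
              field_simp
              ring
        _ = ENNReal.ofReal (Real.exp (((k+1:ℕ):ℝ)*ε)) * A (Z (k+1)) E +
            ENNReal.ofReal ((Real.exp (((k+1:ℕ):ℝ)*ε) - 1) / (Real.exp ε - 1) * δ) := by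
            push_cast; rfl
  have := key s le_rfl
  rwa [hZs] at this
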